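/- Let G be a finitely generated group. If the subgroup [G, G^φ] of ν(G) (the non-abelian tensor square of G) is finite, then G is finite. -/

import Mathlib

namespace TensorNu

universe u

/-- The commutator `[x,y] = x⁻¹y⁻¹xy`. -/
def comm {K : Type*} [Group K] (x y : K) : K := x⁻¹ * y⁻¹ * x * y

/-- Conjugation `x^y = y⁻¹xy`. -/
def conj {K : Type*} [Group K] (x y : K) : K := y⁻¹ * x * y

variable (G : Type u) [Group G]

/-- The defining relators of `ν(G)`, as elements of the free group on `G ⊕ G`,
where `Sum.inl` corresponds to the canonical copy of `G` and `Sum.inr` to the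
isomorphic copy `G^φ` (`g ↦ g^φ`).  They comprise the multiplication tables of
`G` and of `G^φ`, together with the relations
`[g₁,g₂^φ]^{g₃} = [g₁^{g₃},(g₂^{g₃})^φ]` and `[g₁,g₂^φ]^{g₃} = [g₁,g₂^φ]^{g₃^φ}`. -/
def nuRels : Set (FreeGroup (G ⊕ G)) :=
  {r | (∃ g h : G, r = FreeGroup.of (Sum.inl g) * FreeGroup.of (Sum.inl h) *
          (FreeGroup.of (Sum.inl (g * h)))⁻¹)
     ∨ (∃ g h : G, r = FreeGroup.of (Sum.inr g) * FreeGroup.of (Sum.inr h) *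
          (FreeGroup.of (Sum.inr (g * h)))⁻¹)
     ∨ (∃ g₁ g₂ g₃ : G, r =
          conj (comm (FreeGroup.of (Sum.inl g₁)) (FreeGroup.of (Sum.inr g₂)))
              (FreeGroup.of (Sum.inl g₃)) *
            (comm (FreeGroup.of (Sum.inl (conj g₁ g₃)))
              (FreeGroup.of (Sum.inr (conj g₂ g₃))))⁻¹)
     ∨ (∃ g₁ g₂ g₃ : G, r =
          conj (comm (FreeGroup.of (Sum.inl g₁)) (FreeGroup.of (Sum.inr g₂)))
              (FreeGroup.of (Sum.inl g₃)) *
            (conj (comm (FreeGroup.of (Sum.inl g₁)) (FreeGroup.of (Sum.inr g₂)))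
              (FreeGroup.of (Sum.inr g₃)))⁻¹)}

/-- The group `ν(G)`. -/
abbrev Nu := PresentedGroup (nuRels G)

/-- The canonical image of `g ∈ G` in `ν(G)`. -/
def ι (g : G) : Nu G := PresentedGroup.of (Sum.inl g)

/-- The canonical image `g^φ` of `g ∈ G` (via the copy `G^φ`) in `ν(G)`. -/
def ιφ (g : G) : Nu G := PresentedGroup.of (Sum.inr g)

/-- The set `T⊗(G)` of tensors `[a, b^φ]`, `a, b ∈ G`. -/
def tensorSet : Set (Nu G) := {x | ∃ a b : G, x = comm (ι G a) (ιφ G b)}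

/-- The image of `G` in `ν(G)` as a subgroup. -/
def GSub : Subgroup (Nu G) := Subgroup.closure (Set.range (ι G))

/-- The image of `G^φ` in `ν(G)` as a subgroup. -/
def GφSub : Subgroup (Nu G) := Subgroup.closure (Set.range (ιφ G))

/-- The non-abelian tensor square `[G, G^φ] ≤ ν(G)`. -/
def tensorSquare : Subgroup (Nu G) := ⁅GSub G, GφSub G⁆

/-- `[S, x]`: the subgroup generated by the commutators `[s, x]`, `s ∈ S`. -/
def commSub {K : Type*} [Group K] (S : Set K) (x : K) : Subgroup K :=
  Subgroup.closure {c | ∃ s ∈ S, c = comm s x}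

end TensorNu

namespace TensorNu

/- ### Auxiliary material -/

section CommConj

variable {K L : Type*} [Group K] [Group L]

lemma map_comm (f : K →* L) (x y : K) : f (comm x y) = comm (f x) (f y) := by simp [comm]

lemma map_conj (f : K →* L) (x y : K) : f (conj x y) = conj (f x) (f y) := by simp [conj]

lemma conj_comm_eq (x y z : K) : conj (comm x y) z = comm (conj x z) (conj y z) := by
  simp only [comm, conj]; group

open scoped commutatorElement in
lemma comm_eq_commutator (x y : K) : comm x y = ⁅x⁻¹, y⁻¹⁆ := by
  simp [comm, commutatorElement_def]

end CommConj

section NuLift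

variable {G : Type u} [Group G] {H : Type*} [Group H]

/-- Universal property used below: a pair of homomorphisms `A B : G →* H`
satisfying the ν-relations induces a homomorphism `ν(G) →* H`. -/
def nuLift (A B : G →* H)
    (h3 : ∀ g₁ g₂ g₃ : G, conj (comm (A g₁) (B g₂)) (A g₃)
        = comm (conj (A g₁) (A g₃)) (conj (B g₂) (B g₃)))
    (h4 : ∀ g₁ g₂ g₃ : G, conj (comm (A g₁) (B g₂)) (A g₃)
        = conj (comm (A g₁) (B g₂)) (B g₃)) :
    Nu G →* H :=
  PresentedGroup.toGroup (f := Sum.elim A B) (by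
    rintro r hr
    obtain (⟨g, h, rfl⟩ | ⟨g, h, rfl⟩ | ⟨g₁, g₂, g₃, rfl⟩ | ⟨g₁, g₂, g₃, rfl⟩) := hr
    · simp only [map_mul, map_inv, FreeGroup.lift_apply_of, Sum.elim_inl]; group
    · simp only [map_mul, map_inv, FreeGroup.lift_apply_of, Sum.elim_inr]; group
    · simp only [map_mul, map_inv, map_conj, map_comm, FreeGroup.lift_apply_of,
        Sum.elim_inl, Sum.elim_inr]
      rw [mul_inv_eq_one]
      exact h3 g₁ g₂ g₃
    · simp only [map_mul, map_inv, map_conj, map_comm, FreeGroup.lift_apply_of,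
        Sum.elim_inl, Sum.elim_inr]
      rw [mul_inv_eq_one]
      exact h4 g₁ g₂ g₃)

@[simp] lemma nuLift_ι (A B : G →* H) (h3) (h4) (g : G) :
    nuLift A B h3 h4 (ι G g) = A g :=
  PresentedGroup.toGroup.of _

@[simp] lemma nuLift_ιφ (A B : G →* H) (h3) (h4) (g : G) :
    nuLift A B h3 h4 (ιφ G g) = B g :=
  PresentedGroup.toGroup.of _

end NuLift

section Kappa

variable (G : Type u) [Group G]

/-- The canonical homomorphism `κ : ν(G) →* G`, sending both copies of `G`
identically onto `G`. -/
def kappa : Nu G →* G :=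
  nuLift (MonoidHom.id G) (MonoidHom.id G)
    (fun g₁ g₂ g₃ => conj_comm_eq _ _ _) (fun _ _ _ => rfl)

lemma map_kappa_GSub : (GSub G).map (kappa G) = ⊤ := by
  rw [GSub, MonoidHom.map_closure, eq_top_iff]
  intro x _
  apply Subgroup.subset_closure
  exact ⟨ι G x, ⟨x, rfl⟩, by simp [kappa]⟩

lemma map_kappa_GφSub : (GφSub G).map (kappa G) = ⊤ := by
  rw [GφSub, MonoidHom.map_closure, eq_top_iff]
  intro x _
  apply Subgroup.subset_closure
  exact ⟨ιφ G x, ⟨x, rfl⟩, by simp [kappa]⟩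

lemma map_kappa_tensorSquare : (tensorSquare G).map (kappa G) = commutator G := by
  rw [tensorSquare, Subgroup.map_commutator, map_kappa_GSub, map_kappa_GφSub, commutator_def]

lemma finite_commutator (h : Finite (tensorSquare G)) : Finite (commutator G) := by
  have hs : ((tensorSquare G : Set (Nu G))).Finite := by
    rw [← Set.finite_coe_iff]; exact h
  have : (((tensorSquare G).map (kappa G) : Subgroup G) : Set G).Finite := by
    rw [Subgroup.coe_map]; exact hs.image _
  rw [map_kappa_tensorSquare] at this
  exact Set.finite_coe_iff.mpr this

end Kappa

/- ### The discrete Heisenberg group -/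

@[ext] structure Heis where
  a : ℤ
  b : ℤ
  c : ℤ

namespace Heis

instance : Mul Heis := ⟨fun p q => ⟨p.a + q.a, p.b + q.b, p.c + q.c + p.a * q.b⟩⟩
instance : One Heis := ⟨⟨0, 0, 0⟩⟩
instance : Inv Heis := ⟨fun p => ⟨-p.a, -p.b, -p.c + p.a * p.b⟩⟩

@[simp] lemma mul_a (p q : Heis) : (p * q).a = p.a + q.a := rfl
@[simp] lemma mul_b (p q : Heis) : (p * q).b = p.b + q.b := rfl
@[simp] lemma mul_c (p q : Heis) : (p * q).c = p.c + q.c + p.a * q.b := rfl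
@[simp] lemma one_a : (1 : Heis).a = 0 := rfl
@[simp] lemma one_b : (1 : Heis).b = 0 := rfl
@[simp] lemma one_c : (1 : Heis).c = 0 := rfl
@[simp] lemma inv_a (p : Heis) : (p⁻¹).a = -p.a := rfl
@[simp] lemma inv_b (p : Heis) : (p⁻¹).b = -p.b := rfl
@[simp] lemma inv_c (p : Heis) : (p⁻¹).c = -p.c + p.a * p.b := rfl

instance : Group Heis where
  mul_assoc p q r := by ext <;> simp <;> ring
  one_mul p := by ext <;> simp
  mul_one p := by ext <;> simp
  inv_mul_cancel p := by ext <;> simp <;> ring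

end Heis

section Heisenberg

variable {G : Type u} [Group G]

/-- First Heisenberg embedding. -/
def hA (F : G →* Multiplicative ℤ) : G →* Heis where
  toFun g := ⟨(F g).toAdd, 0, 0⟩
  map_one' := by ext <;> simp
  map_mul' g h := by ext <;> simp

/-- Second Heisenberg embedding. -/
def hB (F : G →* Multiplicative ℤ) : G →* Heis where
  toFun g := ⟨0, (F g).toAdd, 0⟩
  map_one' := by ext <;> simp
  map_mul' g h := by ext <;> simp

lemma hA_apply (F : G →* Multiplicative ℤ) (g : G) : hA F g = ⟨(F g).toAdd, 0, 0⟩ := rfl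
lemma hB_apply (F : G →* Multiplicative ℤ) (g : G) : hB F g = ⟨0, (F g).toAdd, 0⟩ := rfl

lemma h3_heis (F : G →* Multiplicative ℤ) (g₁ g₂ g₃ : G) :
    conj (comm (hA F g₁) (hB F g₂)) (hA F g₃)
      = comm (conj (hA F g₁) (hA F g₃)) (conj (hB F g₂) (hB F g₃)) := by
  simp only [conj, comm, hA_apply, hB_apply]
  ext <;> simp <;> ring

lemma h4_heis (F : G →* Multiplicative ℤ) (g₁ g₂ g₃ : G) :
    conj (comm (hA F g₁) (hB F g₂)) (hA F g₃)
      = conj (comm (hA F g₁) (hB F g₂)) (hB F g₃) := by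
  simp only [conj, comm, hA_apply, hB_apply]
  ext <;> simp <;> ring

/-- The homomorphism `ν(G) →* Heis` induced by `F`. -/
def heisHom (F : G →* Multiplicative ℤ) : Nu G →* Heis :=
  nuLift (hA F) (hB F) (h3_heis F) (h4_heis F)

lemma heisHom_comm (F : G →* Multiplicative ℤ) (g h : G) :
    heisHom F (comm (ι G g) (ιφ G h)) = ⟨0, 0, (F g).toAdd * (F h).toAdd⟩ := by
  rw [map_comm]
  simp only [heisHom, nuLift_ι, nuLift_ιφ, hA_apply, hB_apply, comm]
  ext <;> simp <;> ring

lemma tensor_mem (g h : G) : comm (ι G g) (ιφ G h) ∈ tensorSquare G := by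
  rw [comm_eq_commutator, tensorSquare]
  exact Subgroup.commutator_mem_commutator
    (Subgroup.inv_mem _ (Subgroup.subset_closure ⟨g, rfl⟩))
    (Subgroup.inv_mem _ (Subgroup.subset_closure ⟨h, rfl⟩))

lemma not_finite_tensorSquare_of_surj (F : G →* Multiplicative ℤ)
    (hF : Function.Surjective F) (h : Finite (tensorSquare G)) : False := by
  obtain ⟨g₀, hg₀⟩ := hF (Multiplicative.ofAdd 1)
  choose pre hpre using fun n : ℤ => hF (Multiplicative.ofAdd n)
  have hinj : Function.Injective
      (fun n : ℤ => (⟨comm (ι G g₀) (ιφ G (pre n)), tensor_mem g₀ (pre n)⟩ :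
        tensorSquare G)) := by
    intro m n hmn
    have h2 : heisHom F (comm (ι G g₀) (ιφ G (pre m)))
        = heisHom F (comm (ι G g₀) (ιφ G (pre n))) := by
      exact congrArg (heisHom F) (congrArg Subtype.val hmn)
    rw [heisHom_comm, heisHom_comm, hg₀, hpre, hpre] at h2
    simpa using congrArg Heis.c h2
  haveI : Finite ℤ := Finite.of_injective _ hinj
  exact not_finite ℤ

end Heisenberg

/- ### Finitely generated infinite abelian groups surject onto ℤ -/

lemma exists_surj_hom_int (A : Type*) [CommGroup A] [Group.FG A] [Infinite A] :
    ∃ f : A →* Multiplicative ℤ, Function.Surjective f := by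
  obtain ⟨n, ι', fι, p, hp, e, ⟨eqv⟩⟩ :=
    AddCommGroup.equiv_free_prod_directSum_zmod (Additive A)
  rcases Nat.eq_zero_or_pos n with hn | hn
  · exfalso
    subst hn
    haveI : ∀ i, NeZero (p i ^ e i) := fun i => ⟨pow_ne_zero _ (hp i).pos.ne'⟩
    haveI : Finite (DirectSum ι' fun i => ZMod (p i ^ e i)) :=
      Finite.of_equiv (∀ i : ι', ZMod (p i ^ e i)) DFinsupp.equivFunOnFintype.symm
    haveI : Subsingleton (Fin 0 →₀ ℤ) :=
      ⟨fun x y => Finsupp.ext fun i => i.elim0⟩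
    haveI : Finite (Additive A) := Finite.of_equiv _ eqv.toEquiv.symm
    haveI : Finite A := Finite.of_equiv (Additive A) Additive.toMul
    exact not_finite A
  · let i0 : Fin n := ⟨0, hn⟩
    let π1 : (Fin n →₀ ℤ) × (DirectSum ι' fun i => ZMod (p i ^ e i)) →+ ℤ :=
      (Finsupp.applyAddHom i0).comp (AddMonoidHom.fst _ _)
    let φ : Additive A →+ ℤ := π1.comp eqv.toAddMonoidHom
    refine ⟨AddMonoidHom.toMultiplicativeRight φ, fun m => ?_⟩
    refine ⟨eqv.symm (Finsupp.single i0 m.toAdd, 0), ?_⟩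
    have : φ (eqv.symm (Finsupp.single i0 m.toAdd, 0)) = m.toAdd := by
      simp [φ, π1]
    show Multiplicative.ofAdd (φ (eqv.symm (Finsupp.single i0 m.toAdd, 0))) = m
    rw [this]
    simp

end TensorNu

namespace TensorNu

/-- If `G` is finitely generated and the non-abelian tensor square `[G, G^φ]` is
finite, then `G` is finite. -/
theorem finite_of_finite_tensorSquare (G : Type u) [Group G] (hfg : Group.FG G)
    (h : Finite (tensorSquare G)) : Finite G := by
  haveI := hfg
  haveI h1 : Finite (commutator G) := finite_commutator G h
  haveI : Group.FG (Abelianization G) :=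
    Group.fg_of_surjective (QuotientGroup.mk'_surjective (commutator G))
  have h2 : Finite (Abelianization G) := by
    by_contra hinf
    haveI : Infinite (Abelianization G) := not_finite_iff_infinite.mp hinf
    obtain ⟨f, hf⟩ := exists_surj_hom_int (Abelianization G)
    exact not_finite_tensorSquare_of_surj
      (f.comp (QuotientGroup.mk' (commutator G)))
      (hf.comp (QuotientGroup.mk'_surjective (commutator G))) h
  haveI : Finite (G ⧸ commutator G) := h2
  exact Finite.of_equiv _ (Subgroup.groupEquivQuotientProdSubgroup
    (s := commutator G)).symm

end TensorNu
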